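/- Suppose γ_m ≤ C γ^m for constants C < ∞ and 0 < γ < 1, and γ_0 < 1. Then P(S_n = 0) decays exponentially: there exist constants K and ζ < 1 such that P(S_n = 0) ≤ K ζ^n. -/

import Mathlib

open Finset

/-- `hoc γ n j` is the probability `P(S_n = j)` for the "house of cards" Markov chain on `ℕ`
starting at `0`, with transition probabilities `p_{i,i+1} = 1 - γ i` and `p_{i,0} = γ i`. -/
noncomputable def hoc (γ : ℕ → ℝ) : ℕ → ℕ → ℝ
  | 0, j => if j = 0 then 1 else 0
  | n + 1, 0 => ∑ i ∈ Finset.range (n + 1), γ i * hoc γ n i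
  | n + 1, j + 1 => (1 - γ j) * hoc γ n j

/-- `ptau γ n` is `P(τ = n)`, the distribution of the first return time to `0`:
`P(τ = n) = γ_{n-1} ∏_{m=0}^{n-2} (1 - γ_m)` for `n ≥ 1`, and `0` for `n = 0`. -/
noncomputable def ptau (γ : ℕ → ℝ) (n : ℕ) : ℝ :=
  if n = 0 then 0 else γ (n - 1) * ∏ m ∈ Finset.range (n - 1), (1 - γ m)

/-- `tailS γ n k = P(S_n ≥ k)` (the chain satisfies `S_n ≤ n`). -/
noncomputable def tailS (γ : ℕ → ℝ) (n k : ℕ) : ℝ :=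
  ∑ j ∈ Finset.Icc k n, hoc γ n j

lemma hoc_nonneg (γ : ℕ → ℝ) (hγ0 : ∀ m, 0 ≤ γ m) (hγ1 : ∀ m, γ m ≤ 1) :
    ∀ n j, 0 ≤ hoc γ n j := by
  intro n
  induction n with
  | zero => intro j; rw [hoc]; split <;> norm_num
  | succ n ih =>
    intro j
    match j with
    | 0 =>
      rw [hoc]
      exact Finset.sum_nonneg fun i _ => mul_nonneg (hγ0 i) (ih i)
    | j + 1 =>
      rw [hoc]
      exact mul_nonneg (by linarith [hγ1 j]) (ih j)

lemma hoc_eq (γ : ℕ → ℝ) :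
    ∀ n j, j ≤ n → hoc γ n j = (∏ m ∈ range j, (1 - γ m)) * hoc γ (n - j) 0 := by
  intro n
  induction n with
  | zero => intro j hj; interval_cases j; simp
  | succ n ih =>
    intro j hj
    match j with
    | 0 => simp
    | k + 1 =>
      rw [hoc, ih k (by omega), Finset.prod_range_succ]
      have : n + 1 - (k + 1) = n - k := by omega
      rw [this]; ring


set_option maxHeartbeats 2000000 in
/-- If `γ_m ≤ C r^m` with `0 < r < 1` (and `γ_0 < 1`), then `P(S_n = 0)` decays
exponentially: there are constants `K` and `ζ < 1` with `P(S_n = 0) ≤ K ζ^n`. -/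
theorem hoc_exponential_decay (γ : ℕ → ℝ) (C r : ℝ) (hdec : Antitone γ)
    (hγ0 : ∀ m, 0 ≤ γ m) (hγ1 : ∀ m, γ m < 1)
    (hr0 : 0 < r) (hr1 : r < 1) (hγexp : ∀ m, γ m ≤ C * r ^ m) :
    ∃ K ζ : ℝ, 0 ≤ ζ ∧ ζ < 1 ∧ ∀ n, hoc γ n 0 ≤ K * ζ ^ n := by
  have hC : 0 ≤ C := le_trans (hγ0 0) (by simpa using hγexp 0)
  obtain ⟨π, hπdef⟩ : ∃ π : ℕ → ℝ, ∀ N, π N = ∏ m ∈ range N, (1 - γ m) :=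
    ⟨_, fun N => rfl⟩
  have hπpos : ∀ N, 0 < π N := fun N => by
    rw [hπdef]; exact Finset.prod_pos fun m _ => by linarith [hγ1 m]
  have hπle1 : ∀ N, π N ≤ 1 := fun N => by
    rw [hπdef]
    exact Finset.prod_le_one (fun m _ => by linarith [hγ1 m]) (fun m _ => by linarith [hγ0 m])
  have hπsucc : ∀ N, π (N + 1) = π N * (1 - γ N) := fun N => by
    rw [hπdef, hπdef, Finset.prod_range_succ]
  have hsum : ∀ N, ∑ i ∈ range N, γ i * π i = 1 - π N := by
    intro N
    have h0 := Finset.sum_range_sub' π N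
    have h1 : ∀ i, π i - π (i + 1) = γ i * π i := by
      intro i; rw [hπsucc]; ring
    calc ∑ i ∈ range N, γ i * π i = ∑ i ∈ range N, (π i - π (i + 1)) := by
          exact Finset.sum_congr rfl fun i _ => (h1 i).symm
      _ = π 0 - π N := h0
      _ = 1 - π N := by rw [hπdef]; simp
  -- lower bound for π
  obtain ⟨δ, hδdef⟩ : ∃ δ : ℝ, δ = Real.exp (-(C / (1 - r)) / (1 - γ 0)) := ⟨_, rfl⟩
  have hγ01 : 0 < 1 - γ 0 := by linarith [hγ1 0]
  have hδpos : 0 < δ := hδdef ▸ Real.exp_pos _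
  have hδ1 : δ ≤ 1 := by
    rw [hδdef]
    apply Real.exp_le_one_iff.mpr
    have hCr : 0 ≤ C / (1 - r) := div_nonneg hC (by linarith)
    apply div_nonpos_of_nonpos_of_nonneg (by linarith) (by linarith)
  have hδπ : ∀ N, δ ≤ π N := by
    intro N
    have hstep : ∀ m, Real.exp (-(γ m / (1 - γ 0))) ≤ 1 - γ m := by
      intro m
      have h1 : 0 < 1 - γ m := by linarith [hγ1 m]
      have h2 : γ m ≤ γ 0 := hdec (Nat.zero_le m)
      have h3 : γ m / (1 - γ m) ≤ γ m / (1 - γ 0) := by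
        apply div_le_div_of_nonneg_left (hγ0 m) hγ01 (by linarith)
      have h4 : 1 / (1 - γ m) ≤ Real.exp (γ m / (1 - γ 0)) := by
        have := Real.add_one_le_exp (γ m / (1 - γ 0))
        have h5 : 1 / (1 - γ m) = γ m / (1 - γ m) + 1 := by field_simp; ring
        linarith
      rw [Real.exp_neg, inv_le_comm₀ (Real.exp_pos _) h1, ← one_div]
      exact h4
    have hsumγ : ∑ m ∈ range N, γ m ≤ C / (1 - r) := by
      have h1 : ∑ m ∈ range N, γ m ≤ ∑ m ∈ range N, C * r ^ m :=
        Finset.sum_le_sum fun m _ => hγexp m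
      have h2 : ∑ m ∈ range N, C * r ^ m = C * ((r ^ N - 1) / (r - 1)) := by
        rw [← Finset.mul_sum, geom_sum_eq (by linarith)]
      have heq : (r ^ N - 1) / (r - 1) = (1 - r ^ N) / (1 - r) := by
        rw [div_eq_div_iff (by linarith) (by linarith)]; ring
      have h3 : (1 - r ^ N) / (1 - r) ≤ 1 / (1 - r) := by
        gcongr
        nlinarith [pow_nonneg hr0.le N]
      have h4 : C * ((r ^ N - 1) / (r - 1)) ≤ C * (1 / (1 - r)) := by
        rw [heq]; exact mul_le_mul_of_nonneg_left h3 hC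
      rw [mul_one_div] at h4
      linarith
    calc δ ≤ Real.exp (-(∑ m ∈ range N, γ m) / (1 - γ 0)) := by
          rw [hδdef]
          apply Real.exp_le_exp.mpr
          apply (div_le_div_iff_of_pos_right hγ01).mpr
          linarith
      _ = ∏ m ∈ range N, Real.exp (-(γ m / (1 - γ 0))) := by
          rw [← Real.exp_sum]
          congr 1
          rw [Finset.sum_neg_distrib, neg_div, Finset.sum_div]
      _ ≤ π N := by
          rw [hπdef]
          exact Finset.prod_le_prod (fun m _ => (Real.exp_pos _).le) (fun m _ => hstep m)
  -- constants
  obtain ⟨ε, hεdef⟩ : ∃ ε : ℝ, ε = δ / 3 := ⟨_, rfl⟩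
  have hεpos : 0 < ε := by rw [hεdef]; linarith
  obtain ⟨s₀, hs₀def⟩ : ∃ s₀ : ℝ, s₀ = 2 * r / (1 + r) := ⟨_, rfl⟩
  have hs₀pos : 0 < s₀ := hs₀def ▸ div_pos (by linarith) (by linarith)
  have hs₀1 : s₀ < 1 := by rw [hs₀def, div_lt_one (by linarith)]; linarith
  obtain ⟨N₀, hN₀⟩ := exists_pow_lt_of_lt_one
    (show (0:ℝ) < ε * (1 - s₀) * (1 + r) / (2 * (C + 1)) from
      div_pos (mul_pos (mul_pos hεpos (by linarith)) (by linarith)) (by linarith)) hs₀1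
  obtain ⟨N, hNdef⟩ : ∃ N : ℕ, N = N₀ + 1 := ⟨_, rfl⟩
  have hNpos : 0 < N := by omega
  have hN : s₀ ^ N ≤ ε * (1 - s₀) * (1 + r) / (2 * (C + 1)) := by
    calc s₀ ^ N ≤ s₀ ^ N₀ := pow_le_pow_of_le_one hs₀pos.le hs₀1.le (by omega)
      _ ≤ _ := hN₀.le
  obtain ⟨q, hqdef⟩ : ∃ q : ℝ, q = 1 - δ := ⟨_, rfl⟩
  have hq0 : 0 ≤ q := by rw [hqdef]; linarith
  have hqε : 0 < q + ε := by linarith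
  obtain ⟨ζ, hζdef⟩ : ∃ ζ : ℝ, ζ = max ((1 + r) / 2) (1 - ε / (N * (q + ε))) := ⟨_, rfl⟩
  have hζr : (1 + r) / 2 ≤ ζ := hζdef ▸ le_max_left _ _
  have hζpos : 0 < ζ := lt_of_lt_of_le (by linarith) hζr
  have hNR : (0:ℝ) < (N : ℝ) := by exact_mod_cast hNpos
  have hζ1 : ζ < 1 := by
    rw [hζdef]
    apply max_lt (by linarith)
    have : 0 < ε / ((N : ℝ) * (q + ε)) := div_pos hεpos (mul_pos hNR hqε)
    linarith
  have hζN : q ≤ (q + ε) * ζ ^ N := by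
    have hb : 1 + (N : ℝ) * (ζ - 1) ≤ ζ ^ N := by
      have := one_add_mul_le_pow (a := ζ - 1) (by linarith) N
      simpa using this
    have h2 : 1 - ε / ((N : ℝ) * (q + ε)) ≤ ζ := hζdef ▸ le_max_right _ _
    have h3 : -(ε / (q + ε)) ≤ (N : ℝ) * (ζ - 1) := by
      have h5 : -(ε / ((N : ℝ) * (q + ε))) ≤ ζ - 1 := by linarith
      have h6 : (N : ℝ) * (-(ε / ((N : ℝ) * (q + ε)))) ≤ (N : ℝ) * (ζ - 1) :=
        mul_le_mul_of_nonneg_left h5 hNR.le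
      have h7 : (N : ℝ) * (-(ε / ((N : ℝ) * (q + ε)))) = -(ε / (q + ε)) := by
        field_simp
      linarith
    have h4 : 1 - ε / (q + ε) ≤ ζ ^ N := by linarith
    have h5 : (q + ε) * (1 - ε / (q + ε)) = q := by field_simp; ring
    calc q = (q + ε) * (1 - ε / (q + ε)) := h5.symm
      _ ≤ (q + ε) * ζ ^ N := mul_le_mul_of_nonneg_left h4 hqε.le
  obtain ⟨η, hηdef⟩ : ∃ η : ℝ, η = ζ⁻¹ := ⟨_, rfl⟩
  have hηpos : 0 < η := hηdef ▸ inv_pos.mpr hζpos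
  have hη1 : 1 ≤ η := hηdef ▸ (one_le_inv₀ hζpos).mpr hζ1.le
  have hηle : η ≤ 2 / (1 + r) := by
    rw [hηdef]
    have := inv_anti₀ (show (0:ℝ) < (1 + r) / 2 by linarith) hζr
    calc ζ⁻¹ ≤ ((1 + r) / 2)⁻¹ := this
      _ = 2 / (1 + r) := by rw [inv_div]
  have hrη : r * η ≤ s₀ := by
    rw [hs₀def]
    calc r * η ≤ r * (2 / (1 + r)) := mul_le_mul_of_nonneg_left hηle hr0.le
      _ = 2 * r / (1 + r) := by ring
  -- head bound
  have hhead : ∀ M, M ≤ N → ∑ i ∈ range M, γ i * π i * η ^ (i + 1) ≤ q + ε := by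
    intro M hM
    have h1 : ∑ i ∈ range M, γ i * π i * η ^ (i + 1) ≤ ∑ i ∈ range M, γ i * π i * η ^ N := by
      apply Finset.sum_le_sum
      intro i hi
      have hi' : i + 1 ≤ N := by have := Finset.mem_range.mp hi; omega
      exact mul_le_mul_of_nonneg_left (pow_le_pow_right₀ hη1 hi')
        (mul_nonneg (hγ0 i) (hπpos i).le)
    have h2 : ∑ i ∈ range M, γ i * π i * η ^ N = (1 - π M) * η ^ N := by
      rw [← Finset.sum_mul, hsum]
    have h3 : (1 - π M) * η ^ N ≤ q * η ^ N := by
      apply mul_le_mul_of_nonneg_right _ (pow_nonneg hηpos.le N)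
      have := hδπ M; rw [hqdef]; linarith
    have h4 : q * η ^ N ≤ q + ε := by
      rw [hηdef, inv_pow, ← div_eq_mul_inv, div_le_iff₀ (pow_pos hζpos N)]
      exact hζN
    linarith
  -- tail bound
  have htail : ∀ M, N ≤ M → ∑ i ∈ Ico N M, γ i * π i * η ^ (i + 1) ≤ ε := by
    intro M hM
    have hterm : ∀ i, γ i * π i * η ^ (i + 1) ≤ 2 * (C + 1) / (1 + r) * s₀ ^ i := by
      intro i
      have h1 : γ i * π i ≤ C * r ^ i := by
        calc γ i * π i ≤ γ i * 1 := mul_le_mul_of_nonneg_left (hπle1 i) (hγ0 i)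
          _ = γ i := mul_one _
          _ ≤ C * r ^ i := hγexp i
      calc γ i * π i * η ^ (i + 1) ≤ C * r ^ i * η ^ (i + 1) :=
            mul_le_mul_of_nonneg_right h1 (pow_nonneg hηpos.le (i+1))
        _ = (C * η) * (r * η) ^ i := by rw [mul_pow, pow_succ]; ring
        _ ≤ (2 * (C + 1) / (1 + r)) * s₀ ^ i := by
            apply mul_le_mul
            · calc C * η ≤ C * (2 / (1 + r)) := mul_le_mul_of_nonneg_left hηle hC
                _ ≤ (C + 1) * (2 / (1 + r)) := by
                    apply mul_le_mul_of_nonneg_right (by linarith)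
                      (div_nonneg (by norm_num) (by linarith))
                _ = 2 * (C + 1) / (1 + r) := by ring
            · exact pow_le_pow_left₀ (mul_nonneg hr0.le hηpos.le) hrη i
            · exact pow_nonneg (mul_nonneg hr0.le hηpos.le) i
            · exact div_nonneg (by linarith) (by linarith)
    have hgeo : ∑ i ∈ Ico N M, s₀ ^ i ≤ s₀ ^ N / (1 - s₀) := by
      have h1 : ∑ i ∈ Ico N M, s₀ ^ i = s₀ ^ N * ∑ j ∈ range (M - N), s₀ ^ j := by
        rw [Finset.sum_Ico_eq_sum_range, Finset.mul_sum]
        exact Finset.sum_congr rfl fun j _ => by rw [← pow_add]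
      have h2 : ∑ j ∈ range (M - N), s₀ ^ j ≤ 1 / (1 - s₀) := by
        rw [geom_sum_eq (by linarith)]
        have heq : (s₀ ^ (M - N) - 1) / (s₀ - 1) = (1 - s₀ ^ (M - N)) / (1 - s₀) := by
          rw [div_eq_div_iff (by linarith) (by linarith)]; ring
        rw [heq]
        gcongr
        nlinarith [pow_nonneg hs₀pos.le (M - N)]
      calc ∑ i ∈ Ico N M, s₀ ^ i = s₀ ^ N * ∑ j ∈ range (M - N), s₀ ^ j := h1
        _ ≤ s₀ ^ N * (1 / (1 - s₀)) := mul_le_mul_of_nonneg_left h2 (pow_nonneg hs₀pos.le N)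
        _ = s₀ ^ N / (1 - s₀) := by ring
    have hfin : (2 * (C + 1) / (1 + r)) * (s₀ ^ N / (1 - s₀)) ≤ ε := by
      have h1 : (2 * (C + 1) / (1 + r)) * (s₀ ^ N / (1 - s₀)) ≤
          (2 * (C + 1) / (1 + r)) * ((ε * (1 - s₀) * (1 + r) / (2 * (C + 1))) / (1 - s₀)) := by
        apply mul_le_mul_of_nonneg_left _ (div_nonneg (by linarith) (by linarith))
        exact (div_le_div_iff_of_pos_right (by linarith : (0:ℝ) < 1 - s₀)).mpr hN
      have h2 :
          (2 * (C + 1) / (1 + r)) * ((ε * (1 - s₀) * (1 + r) / (2 * (C + 1))) / (1 - s₀)) = ε := by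
        have hx1 : (1 : ℝ) + r ≠ 0 := by linarith
        have hx2 : (2 : ℝ) * (C + 1) ≠ 0 := by linarith
        have hx3 : (1 : ℝ) - s₀ ≠ 0 := by linarith
        field_simp
      linarith
    calc ∑ i ∈ Ico N M, γ i * π i * η ^ (i + 1)
        ≤ ∑ i ∈ Ico N M, 2 * (C + 1) / (1 + r) * s₀ ^ i :=
          Finset.sum_le_sum fun i _ => hterm i
      _ = (2 * (C + 1) / (1 + r)) * ∑ i ∈ Ico N M, s₀ ^ i := by rw [Finset.mul_sum]
      _ ≤ (2 * (C + 1) / (1 + r)) * (s₀ ^ N / (1 - s₀)) :=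
          mul_le_mul_of_nonneg_left hgeo (div_nonneg (by linarith) (by linarith))
      _ ≤ ε := hfin
  -- key renewal bound
  have hkey : ∀ M, ∑ i ∈ range M, γ i * π i * η ^ (i + 1) ≤ q + 2 * ε := by
    intro M
    rcases le_or_gt M N with h | h
    · have := hhead M h; linarith
    · rw [Finset.range_eq_Ico, ← Finset.sum_Ico_consecutive _ (Nat.zero_le N) h.le]
      have h1 := hhead N le_rfl
      rw [Finset.range_eq_Ico] at h1
      have h2 := htail M h.le
      linarith
  -- main induction
  have hmain : ∀ n, hoc γ n 0 ≤ ζ ^ n := by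
    intro n
    induction n using Nat.strong_induction_on with
    | _ n ih =>
      match n with
      | 0 => rw [hoc]; simp
      | n + 1 =>
        rw [hoc]
        calc ∑ i ∈ range (n + 1), γ i * hoc γ n i
            ≤ ∑ i ∈ range (n + 1), γ i * π i * η ^ (i + 1) * ζ ^ (n + 1) := by
              apply Finset.sum_le_sum
              intro i hi
              have hi' : i ≤ n := by have := Finset.mem_range.mp hi; omega
              rw [hoc_eq γ n i hi', ← hπdef i]
              have h1 : hoc γ (n - i) 0 ≤ ζ ^ (n - i) := ih (n - i) (by omega)
              have h2 : η ^ (i + 1) * ζ ^ (n + 1) = ζ ^ (n - i) := by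
                have h3 : ζ ^ (n - i) * ζ ^ (i + 1) = ζ ^ (n + 1) := by
                  rw [← pow_add]; congr 1; omega
                rw [hηdef, inv_pow, ← h3]
                field_simp
              have h4 : γ i * (π i * hoc γ (n - i) 0) ≤ γ i * (π i * ζ ^ (n - i)) := by
                apply mul_le_mul_of_nonneg_left _ (hγ0 i)
                exact mul_le_mul_of_nonneg_left h1 (hπpos i).le
              calc γ i * (π i * hoc γ (n - i) 0)
                  ≤ γ i * (π i * ζ ^ (n - i)) := h4
                _ = γ i * π i * η ^ (i + 1) * ζ ^ (n + 1) := by rw [← h2]; ring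
          _ = (∑ i ∈ range (n + 1), γ i * π i * η ^ (i + 1)) * ζ ^ (n + 1) := by
              rw [Finset.sum_mul]
          _ ≤ (q + 2 * ε) * ζ ^ (n + 1) :=
              mul_le_mul_of_nonneg_right (hkey (n + 1)) (pow_nonneg hζpos.le (n+1))
          _ ≤ 1 * ζ ^ (n + 1) := by
              apply mul_le_mul_of_nonneg_right _ (pow_nonneg hζpos.le (n+1))
              rw [hqdef, hεdef]; linarith
          _ = ζ ^ (n + 1) := one_mul _
  exact ⟨1, ζ, hζpos.le, hζ1, fun n => by rw [one_mul]; exact hmain n⟩
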